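/- arXiv:1203.0734 — 3 statements merged into one kernel-verified Lean document; each statement's English description precedes it below -/
import Mathlib

section
/- For any α ∈ [1,2], any σ ∈ (0,1), and any x ∈ ℝ^N with x ≠ 0, the gradient of q_σ(x) = (1+|x|^α)/(1+σ(1+|x|^α)) satisfies |∇q_σ(x)| ≤ α·2^{1-α/2}·q_σ(x)^{1/2} for |x| ≥ 1/2. -/
theorem stmt_1 (N : ℕ) (hN : 1 ≤ N) (α σ : ℝ) (hα : α ∈ Set.Icc (1:ℝ) 2)
    (hσ : σ ∈ Set.Ioo (0:ℝ) 1) (x : EuclideanSpace ℝ (Fin N)) (hx : x ≠ 0)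
    (hx2 : ‖x‖ ≥ 1 / 2) :
    ‖((α * ‖x‖ ^ (α - 2)) / (1 + σ * (1 + ‖x‖ ^ α)) ^ 2) • x‖ ≤
      α * 2 ^ (1 - α / 2) *
        Real.sqrt ((1 + ‖x‖ ^ α) / (1 + σ * (1 + ‖x‖ ^ α))) := by
  obtain ⟨hα1, hα2⟩ := hα
  obtain ⟨hσ0, hσ1⟩ := hσ
  set r := ‖x‖ with hr_def
  have hr : 0 < r := norm_pos_iff.mpr hx
  have hα0 : 0 < α := lt_of_lt_of_le one_pos hα1
  have hrα : 0 < r ^ α := Real.rpow_pos_of_pos hr α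
  set D : ℝ := 1 + σ * (1 + r ^ α) with hD_def
  have hD1 : 1 ≤ D := by
    have : 0 ≤ σ * (1 + r ^ α) := by positivity
    linarith
  have hD0 : 0 < D := lt_of_lt_of_le one_pos hD1
  have hc0 : 0 ≤ (α * r ^ (α - 2)) / D ^ 2 := by positivity
  rw [norm_smul, Real.norm_eq_abs, abs_of_nonneg hc0]
  have hmul : r ^ (α - 2) * r = r ^ (α - 1) := by
    nth_rewrite 2 [← Real.rpow_one r]
    rw [← Real.rpow_add hr]; ring_nf
  have hLHS : (α * r ^ (α - 2)) / D ^ 2 * r = α * (r ^ (α - 1) / D ^ 2) := by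
    field_simp
    exact hmul
  rw [hLHS]
  -- key inequality: r^(α-1) ≤ 2^(1-α/2) * sqrt(1+r^α)
  have hkey : r ^ (α - 1) ≤ 2 ^ (1 - α / 2) * Real.sqrt (1 + r ^ α) := by
    have h2 : (2:ℝ) ^ (1 - α / 2) = Real.sqrt (2 ^ (2 - α)) := by
      rw [Real.sqrt_eq_rpow, ← Real.rpow_mul (by norm_num : (0:ℝ) ≤ 2)]
      ring_nf
    rw [h2, ← Real.sqrt_mul (by positivity)]
    rw [show r ^ (α - 1) = Real.sqrt ((r ^ (α - 1)) ^ 2) from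
      (Real.sqrt_sq (by positivity)).symm]
    apply Real.sqrt_le_sqrt
    have hsq : (r ^ (α - 1)) ^ 2 = r ^ (2 * α - 2) := by
      rw [sq, ← Real.rpow_add hr]; ring_nf
    rw [hsq]
    have h2a : (1:ℝ) ≤ 2 ^ (2 - α) := Real.one_le_rpow one_le_two (by linarith)
    rcases le_or_gt r 1 with hr1 | hr1
    · have h1 : r ^ (2 * α - 2) ≤ 1 :=
        Real.rpow_le_one hr.le hr1 (by linarith)
      nlinarith
    · have h1 : r ^ (2 * α - 2) ≤ r ^ α := by
        have : r ^ (2 * α - 2) = r ^ α * r ^ (α - 2) := by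
          rw [← Real.rpow_add hr]; ring_nf
        rw [this]
        have h2 : r ^ (α - 2) ≤ 1 :=
          Real.rpow_le_one_of_one_le_of_nonpos hr1.le (by linarith)
        nlinarith
      nlinarith
  -- compare 1/D^2 ≤ 1/sqrt D
  have hsqrtD : Real.sqrt D ≤ D ^ 2 := by
    have h1 : Real.sqrt D ≤ D := by
      nlinarith [Real.sq_sqrt hD0.le, Real.sqrt_nonneg D, Real.sqrt_le_sqrt hD1,
        Real.sqrt_one]
    nlinarith
  have hs0 : 0 < Real.sqrt D := Real.sqrt_pos.mpr hD0
  rw [Real.sqrt_div (by positivity : (0:ℝ) ≤ 1 + r ^ α) D]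
  have hmain : r ^ (α - 1) / D ^ 2 ≤
      2 ^ (1 - α / 2) * Real.sqrt (1 + r ^ α) / Real.sqrt D :=
    div_le_div₀ (by positivity) hkey hs0 hsqrtD
  calc α * (r ^ (α - 1) / D ^ 2)
      ≤ α * (2 ^ (1 - α / 2) * Real.sqrt (1 + r ^ α) / Real.sqrt D) :=
        mul_le_mul_of_nonneg_left hmain hα0.le
    _ = α * 2 ^ (1 - α / 2) * (Real.sqrt (1 + r ^ α) / Real.sqrt D) := by ring
end

section
/- Let q : ℝ^N → (0,∞) satisfy |∇q(x)| ≤ κ̃ q(x)^{1/2} everywhere with κ̃ ≥ 1, and define ρ(x) = q(x)^{1/2}/(2κ̃). Then ρ is Lipschitz with constant at most 1/4, and for every x₀ ∈ ℝ^N and every x with |x - x₀| ≤ 2ρ(x₀), one has (1/2)q(x₀)^{1/2} ≤ q(x)^{1/2} ≤ (3/2)q(x₀)^{1/2}. -/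
theorem stmt_7 (N : ℕ) (hN : 1 ≤ N) (κ : ℝ) (hκ : 1 ≤ κ)
    (q : EuclideanSpace ℝ (Fin N) → ℝ) (hqpos : ∀ x, 0 < q x)
    (hq : ContDiff ℝ 1 q)
    (hgrad : ∀ x, ‖fderiv ℝ q x‖ ≤ κ * Real.sqrt (q x))
    (ρ : EuclideanSpace ℝ (Fin N) → ℝ)
    (hρ : ∀ x, ρ x = Real.sqrt (q x) / (2 * κ)) :
    (∀ x y, |ρ x - ρ y| ≤ (1 / 4) * ‖x - y‖) ∧
      ∀ x₀ x, ‖x - x₀‖ ≤ 2 * ρ x₀ →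
        (1 / 2) * Real.sqrt (q x₀) ≤ Real.sqrt (q x) ∧
          Real.sqrt (q x) ≤ (3 / 2) * Real.sqrt (q x₀) := by
  have hκ0 : (0:ℝ) < κ := lt_of_lt_of_le one_pos hκ
  have hsq : ∀ x, 0 < Real.sqrt (q x) := fun x => Real.sqrt_pos.2 (hqpos x)
  -- √q has derivative (1/(2√q x)) • fderiv q x
  have hder : ∀ x, HasFDerivAt (fun y => Real.sqrt (q y))
      ((1 / (2 * Real.sqrt (q x))) • fderiv ℝ q x) x := by
    intro x
    have h1 : HasDerivAt Real.sqrt (1 / (2 * Real.sqrt (q x))) (q x) :=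
      Real.hasDerivAt_sqrt (ne_of_gt (hqpos x))
    have h2 : HasFDerivAt q (fderiv ℝ q x) x :=
      (hq.differentiable one_ne_zero x).hasFDerivAt
    exact h1.comp_hasFDerivAt x h2
  have hbound : ∀ x, ‖(1 / (2 * Real.sqrt (q x))) • fderiv ℝ q x‖ ≤ κ / 2 := by
    intro x
    have h0 := hsq x
    rw [norm_smul, Real.norm_eq_abs, abs_of_pos (div_pos one_pos (by linarith))]
    calc 1 / (2 * Real.sqrt (q x)) * ‖fderiv ℝ q x‖
        ≤ 1 / (2 * Real.sqrt (q x)) * (κ * Real.sqrt (q x)) := by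
          exact mul_le_mul_of_nonneg_left (hgrad x) (by positivity)
      _ = κ / 2 := by
          have h1 := h0.ne'
          field_simp
  -- mean value inequality on univ
  have key : ∀ x y, |Real.sqrt (q x) - Real.sqrt (q y)| ≤ κ / 2 * ‖x - y‖ := by
    intro x y
    have := Convex.norm_image_sub_le_of_norm_hasFDerivWithin_le
      (f := fun z => Real.sqrt (q z))
      (f' := fun z => (1 / (2 * Real.sqrt (q z))) • fderiv ℝ q z)
      (fun z _ => (hder z).hasFDerivWithinAt) (fun z _ => hbound z)
      convex_univ (Set.mem_univ y) (Set.mem_univ x)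
    simpa [Real.norm_eq_abs] using this
  constructor
  · intro x y
    rw [hρ x, hρ y, div_sub_div_same, abs_div,
      abs_of_pos (show (0:ℝ) < 2 * κ by linarith)]
    rw [div_le_iff₀ (by linarith)]
    calc |Real.sqrt (q x) - Real.sqrt (q y)| ≤ κ / 2 * ‖x - y‖ := key x y
      _ = 1 / 4 * ‖x - y‖ * (2 * κ) := by ring
  · intro x₀ x hx
    have h1 : |Real.sqrt (q x) - Real.sqrt (q x₀)| ≤ Real.sqrt (q x₀) / 2 := by
      calc |Real.sqrt (q x) - Real.sqrt (q x₀)| ≤ κ / 2 * ‖x - x₀‖ := key x x₀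
        _ ≤ κ / 2 * (2 * ρ x₀) := by
            exact mul_le_mul_of_nonneg_left hx (by positivity)
        _ = Real.sqrt (q x₀) / 2 := by rw [hρ]; field_simp
    rw [abs_le] at h1
    constructor <;> linarith [h1.1, h1.2]
end

section
/- Let α ∈ [0,2) and β > 0, and define h(r) = (1+r^α)·ψ''(r)/ψ(r), where ψ(r) = r^{-(N-1)/2}((1+r^α)/r^β)^{1/4}. Then h(r) → 0 as r → ∞. -/
open Filter

noncomputable def gf (s α : ℝ) (r : ℝ) : ℝ := s / r + α / 4 * (r ^ (α - 1) / (1 + r ^ α))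

noncomputable def gf' (s α : ℝ) (r : ℝ) : ℝ :=
  -s / r ^ 2 + α / 4 *
    (((α - 1) * r ^ (α - 1 - 1) * (1 + r ^ α) - r ^ (α - 1) * (α * r ^ (α - 1))) / (1 + r ^ α) ^ 2)

lemma hApos {α r : ℝ} (hr : 0 < r) : 0 < 1 + r ^ α := by positivity

lemma deriv_inner {α : ℝ} {r : ℝ} (hr : 0 < r) :
    HasDerivAt (fun x : ℝ => 1 + x ^ α) (α * r ^ (α - 1)) r := by
  exact (Real.hasDerivAt_rpow_const (p := α) (Or.inl hr.ne')).const_add 1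

lemma L1 {q1 q2 α : ℝ} {r : ℝ} (hr : 0 < r) :
    HasDerivAt (fun x : ℝ => x ^ q1 * (1 + x ^ α) ^ ((1:ℝ)/4) * x ^ q2)
      ((r ^ q1 * (1 + r ^ α) ^ ((1:ℝ)/4) * r ^ q2) * gf (q1 + q2) α r) r := by
  have h1 : HasDerivAt (fun x : ℝ => x ^ q1) (q1 * r ^ (q1 - 1)) r :=
    Real.hasDerivAt_rpow_const (Or.inl hr.ne')
  have h2 : HasDerivAt (fun x : ℝ => (1 + x ^ α) ^ ((1:ℝ)/4))
      ((α * r ^ (α - 1)) * ((1:ℝ)/4) * (1 + r ^ α) ^ ((1:ℝ)/4 - 1)) r :=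
    (deriv_inner hr).rpow_const (Or.inl (hApos hr).ne')
  have h3 : HasDerivAt (fun x : ℝ => x ^ q2) (q2 * r ^ (q2 - 1)) r :=
    Real.hasDerivAt_rpow_const (Or.inl hr.ne')
  have hmain := (h1.fun_mul h2).fun_mul h3
  refine hmain.congr_deriv (Eq.symm ?_)
  have hAp := hApos (α := α) (r := r) hr
  unfold gf
  rw [Real.rpow_sub hr q1 1, Real.rpow_sub hAp ((1:ℝ)/4) 1, Real.rpow_sub hr α 1,
    Real.rpow_sub hr q2 1]
  simp only [Real.rpow_one]
  set T : ℝ := r ^ α with hT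
  set X : ℝ := r ^ q1 with hX
  set Z : ℝ := r ^ q2 with hZ
  set Y : ℝ := (1 + T) ^ ((1:ℝ)/4) with hY
  field_simp [hr.ne', hAp.ne']
  ring

lemma L2 {s α : ℝ} {r : ℝ} (hr : 0 < r) : HasDerivAt (gf s α) (gf' s α r) r := by
  have h1 : HasDerivAt (fun x : ℝ => s / x) (-s / r ^ 2) r := by
    have := (hasDerivAt_const r s).fun_div (hasDerivAt_id r) hr.ne'
    refine this.congr_deriv (Eq.symm ?_)
    simp
  have h2 : HasDerivAt (fun x : ℝ => x ^ (α - 1) / (1 + x ^ α))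
      (((α - 1) * r ^ (α - 1 - 1) * (1 + r ^ α) - r ^ (α - 1) * (α * r ^ (α - 1))) /
        (1 + r ^ α) ^ 2) r :=
    (Real.hasDerivAt_rpow_const (Or.inl hr.ne')).div (deriv_inner hr) (hApos hr).ne'
  exact h1.add (h2.const_mul (α / 4))

set_option maxHeartbeats 1000000 in
theorem stmt_11 (N : ℕ) (hN : 1 ≤ N) (α β : ℝ) (hα : α ∈ Set.Ico (0:ℝ) 2)
    (hβ : 0 < β)
    (ψ : ℝ → ℝ)
    (hψ : ∀ r, ψ r = r ^ (-((N:ℝ) - 1) / 2) * (1 + r ^ α) ^ ((1:ℝ)/4) * r ^ (-β / 4)) :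
    Tendsto (fun r => (1 + r ^ α) * deriv (deriv ψ) r / ψ r) atTop (nhds 0) := by
  obtain ⟨hα0, hα2⟩ := hα
  set q1 : ℝ := -((N:ℝ) - 1) / 2 with hq1
  set q2 : ℝ := -β / 4 with hq2
  set s : ℝ := q1 + q2 with hs
  set c : ℝ := α / 4 with hc
  have hψfun : ψ = fun r : ℝ => r ^ q1 * (1 + r ^ α) ^ ((1:ℝ)/4) * r ^ q2 := funext hψ
  have hdψ : ∀ r : ℝ, 0 < r → HasDerivAt ψ (ψ r * gf s α r) r := by
    intro r hr
    rw [hψfun]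
    exact L1 hr
  have hψpos : ∀ r : ℝ, 0 < r → 0 < ψ r := by
    intro r hr
    rw [hψ]
    positivity
  have key : ∀ r : ℝ, 0 < r →
      (1 + r ^ α) * deriv (deriv ψ) r / ψ r = (1 + r ^ α) * (gf s α r ^ 2 + gf' s α r) := by
    intro r hr
    have hev : deriv ψ =ᶠ[nhds r] fun x => ψ x * gf s α x := by
      filter_upwards [isOpen_Ioi.mem_nhds hr] with x hx
      exact (hdψ x hx).deriv
    have h2 : HasDerivAt (fun x => ψ x * gf s α x)
        ((ψ r * gf s α r) * gf s α r + ψ r * gf' s α r) r := (hdψ r hr).mul (L2 hr)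
    rw [hev.deriv_eq, h2.deriv]
    have hne := (hψpos r hr).ne'
    rw [mul_div_assoc]
    congr 1
    rw [div_eq_iff hne]
    ring
  -- explicit form of (1+r^α)(g² + g')
  have ident : ∀ r : ℝ, 0 < r →
      (1 + r ^ α) * (gf s α r ^ 2 + gf' s α r) =
        (s ^ 2 - s) * (1 / r ^ 2) + (s ^ 2 - s + 2 * s * c + c * (α - 1)) * r ^ (α - 2)
          + (c ^ 2 - c * α) * (r ^ (α - 2) * (r ^ α / (1 + r ^ α))) := by
    intro r hr
    have hAp := hApos (α := α) (r := r) hr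
    have e1 : r ^ (α - 1) = r ^ α / r := by
      rw [Real.rpow_sub hr, Real.rpow_one]
    have e2 : r ^ (α - 1 - 1) = r ^ α / r ^ 2 := by
      rw [Real.rpow_sub hr, Real.rpow_sub hr, Real.rpow_one]
      rw [sq]
      ring
    have e3 : r ^ (α - 2) = r ^ α / r ^ 2 := by
      rw [show α - 2 = α - 1 - 1 by ring, e2]
    unfold gf gf'
    rw [e1, e2, e3]
    set T : ℝ := r ^ α with hT
    field_simp [hr.ne', hAp.ne']
    ring
  have lim1 : Tendsto (fun r : ℝ => 1 / r ^ 2) atTop (nhds 0) := by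
    simpa [one_div, Pi.inv_def] using (tendsto_pow_atTop (two_ne_zero)).inv_tendsto_atTop
  have lim2 : Tendsto (fun r : ℝ => r ^ (α - 2)) atTop (nhds 0) := by
    have h := tendsto_rpow_neg_atTop (y := 2 - α) (by linarith)
    simpa [show -(2 - α) = α - 2 by ring] using h
  have lim3 : Tendsto (fun r : ℝ => r ^ (α - 2) * (r ^ α / (1 + r ^ α))) atTop (nhds 0) := by
    apply squeeze_zero' (g := fun r : ℝ => r ^ (α - 2))
    · filter_upwards [eventually_gt_atTop (0:ℝ)] with r hr
      have hAp := hApos (α := α) (r := r) hr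
      positivity
    · filter_upwards [eventually_gt_atTop (0:ℝ)] with r hr
      have hAp := hApos (α := α) (r := r) hr
      have h1 : r ^ α / (1 + r ^ α) ≤ 1 := by
        rw [div_le_one hAp]
        linarith
      have h2 : (0:ℝ) ≤ r ^ (α - 2) := (Real.rpow_pos_of_pos hr _).le
      calc r ^ (α - 2) * (r ^ α / (1 + r ^ α)) ≤ r ^ (α - 2) * 1 :=
            mul_le_mul_of_nonneg_left h1 h2
        _ = r ^ (α - 2) := mul_one _
    · exact lim2
  have limH : Tendsto (fun r : ℝ =>
      (s ^ 2 - s) * (1 / r ^ 2) + (s ^ 2 - s + 2 * s * c + c * (α - 1)) * r ^ (α - 2)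
        + (c ^ 2 - c * α) * (r ^ (α - 2) * (r ^ α / (1 + r ^ α)))) atTop (nhds 0) := by
    have := ((lim1.const_mul (s ^ 2 - s)).add
      (lim2.const_mul (s ^ 2 - s + 2 * s * c + c * (α - 1)))).add
      (lim3.const_mul (c ^ 2 - c * α))
    simpa using this
  apply limH.congr'
  filter_upwards [eventually_gt_atTop (0:ℝ)] with r hr
  rw [key r hr, ident r hr]
end
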